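/- Let G189 be the graph on 6 vertices with edges {12,13,14,23,25,26,35,36,45,46} (K₄ minus an edge on {1,2,3} with pendular structure as described). Then there is no real symmetric orthogonal matrix in S(G189); consequently q(G189)≥3. -/
import Mathlib


open Matrix

/-- `S(G)`: real symmetric matrices whose off-diagonal nonzero pattern is the edge set of `G`. -/
def inS {V : Type*} (G : SimpleGraph V) (A : Matrix V V ℝ) : Prop :=
  A.IsSymm ∧ ∀ i j, i ≠ j → (A i j ≠ 0 ↔ G.Adj i j)

/-- `q(G)`: the minimum number of distinct eigenvalues among matrices in `S(G)`. -/
noncomputable def qGraph {V : Type*} [Fintype V] [DecidableEq V] (G : SimpleGraph V) : ℕ :=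
  sInf {k : ℕ | ∃ A : Matrix V V ℝ, inS G A ∧ (spectrum ℝ A).ncard = k}

/-- The graph G189 on 6 vertices with edges 12,13,14,23,25,26,35,36,45,46 (1-indexed). -/
def graph189 : SimpleGraph (Fin 6) :=
  SimpleGraph.fromRel (fun i j => (i, j) ∈
    ([(0,1),(0,2),(0,3),(1,2),(1,4),(1,5),(2,4),(2,5),(3,4),(3,5)] : List (Fin 6 × Fin 6)))


lemma keyalg (a b d e f q r s t u v w x y z : ℝ)
    (hq : q ≠ 0) (hr : r ≠ 0) (hs : s ≠ 0) (ht : t ≠ 0) (hy : y ≠ 0) (hz : z ≠ 0) (hu : u ≠ 0)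
    (e03 : a * t + t * d = 0)
    (e34 : d * y + y * e = 0)
    (e35 : d * z + z * f = 0)
    (e01 : a * q + q * b + r * s = 0)
    (e14 : b * u + s * w + u * e = 0)
    (e15 : b * v + s * x + v * f = 0)
    (e04 : q * u + r * w + t * y = 0)
    (e05 : q * v + r * x + t * z = 0)
    (e45 : u * v + w * x + y * z = 0) : False := by
  have hd : d = -a := by
    rcases mul_eq_zero.mp (show t * (a + d) = 0 by linear_combination e03) with h | h
    · exact absurd h ht
    · linarith
  have he : e = a := by
    rcases mul_eq_zero.mp (show y * (d + e) = 0 by linear_combination e34) with h | h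
    · exact absurd h hy
    · linarith [hd]
  have hf : f = a := by
    rcases mul_eq_zero.mp (show z * (d + f) = 0 by linear_combination e35) with h | h
    · exact absurd h hz
    · linarith [hd]
  have hab : a + b ≠ 0 := by
    intro h
    rcases mul_eq_zero.mp (show r * s = 0 by linear_combination e01 - q * h) with h' | h'
    · exact hr h'
    · exact hs h'
  have hqw : q * w - r * u = 0 := by
    rcases mul_eq_zero.mp (show (a + b) * (q * w - r * u) = 0 by
      linear_combination w * e01 - r * e14 + r * u * he) with h | h
    · exact absurd h hab
    · exact h
  have hux : u * x - v * w = 0 := by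
    rcases mul_eq_zero.mp (show (a + b) * (u * x - v * w) = 0 by
      linear_combination x * e14 - w * e15 - u * x * he + v * w * hf) with h | h
    · exact absurd h hab
    · exact h
  have hi : q * (u ^ 2 + w ^ 2) + t * y * u = 0 := by
    linear_combination u * e04 + w * hqw
  have hii : q * v * (u ^ 2 + w ^ 2) + t * z * u ^ 2 = 0 := by
    linear_combination u ^ 2 * e05 + x * u * hqw - q * w * hux
  have hiii : v * (u ^ 2 + w ^ 2) + y * z * u = 0 := by
    linear_combination u * e45 - w * hux
  have hP : (0:ℝ) < u ^ 2 + w ^ 2 := by positivity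
  have hqz : q * z - t * v = 0 := by
    rcases mul_eq_zero.mp (show (u ^ 2 + w ^ 2) * (q * z - t * v) = 0 by
      linear_combination z * hi - t * hiii) with h | h
    · exact absurd h (ne_of_gt hP)
    · exact h
  have h1 : z * (q ^ 2 * (u ^ 2 + w ^ 2) + t ^ 2 * u ^ 2) = 0 := by
    linear_combination t * hii + q * (u ^ 2 + w ^ 2) * hqz
  rcases mul_eq_zero.mp h1 with h | h
  · exact hz h
  · have : (0:ℝ) < q ^ 2 * (u ^ 2 + w ^ 2) + t ^ 2 * u ^ 2 := by positivity
    linarith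

lemma sq_eq (A : Matrix (Fin 6) (Fin 6) ℝ) (hA : A.IsHermitian) (l m : ℝ)
    (h : ∀ i, hA.eigenvalues i = l ∨ hA.eigenvalues i = m) :
    (A - l • 1) * (A - m • 1) = 0 := by
  set U : Matrix (Fin 6) (Fin 6) ℝ := (hA.eigenvectorUnitary : Matrix (Fin 6) (Fin 6) ℝ) with hUdef
  have hU1 : U * star U = 1 := mem_unitaryGroup_iff.mp hA.eigenvectorUnitary.2
  have hU2 : star U * U = 1 := mem_unitaryGroup_iff'.mp hA.eigenvectorUnitary.2
  have hsp : A = U * diagonal hA.eigenvalues * star U := by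
    simpa [Function.comp] using hA.spectral_theorem
  have hsm : ∀ c : ℝ, U * (c • 1) * star U = c • (1 : Matrix (Fin 6) (Fin 6) ℝ) := by
    intro c
    rw [mul_smul_comm, mul_one, smul_mul_assoc, hU1]
  have h1 : A - l • 1 = U * (diagonal hA.eigenvalues - l • 1) * star U := by
    rw [mul_sub, sub_mul, ← hsp, hsm]
  have h2 : A - m • 1 = U * (diagonal hA.eigenvalues - m • 1) * star U := by
    rw [mul_sub, sub_mul, ← hsp, hsm]
  have key : (diagonal hA.eigenvalues - l • 1) * (diagonal hA.eigenvalues - m • 1) = 0 := by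
    have hl : (l • (1 : Matrix (Fin 6) (Fin 6) ℝ)) = diagonal (fun _ => l) := by
      simp [Matrix.smul_one_eq_diagonal]
    have hm : (m • (1 : Matrix (Fin 6) (Fin 6) ℝ)) = diagonal (fun _ => m) := by
      simp [Matrix.smul_one_eq_diagonal]
    rw [hl, hm, Matrix.diagonal_sub, Matrix.diagonal_sub, Matrix.diagonal_mul_diagonal]
    have : (fun i => (hA.eigenvalues i - l) * (hA.eigenvalues i - m)) = fun _ => (0:ℝ) := by
      funext i
      rcases h i with hi | hi <;> simp [hi]
    rw [this, Matrix.diagonal_zero]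
  calc (A - l • 1) * (A - m • 1)
      = U * ((diagonal hA.eigenvalues - l • 1) * ((star U * U) *
          ((diagonal hA.eigenvalues - m • 1) * star U))) := by
        rw [h1, h2]; simp only [Matrix.mul_assoc]
    _ = U * (((diagonal hA.eigenvalues - l • 1) * (diagonal hA.eigenvalues - m • 1)) * star U) := by
        rw [hU2, Matrix.one_mul, Matrix.mul_assoc]
    _ = 0 := by rw [key, Matrix.zero_mul, Matrix.mul_zero]

lemma no_inv : ¬ ∃ M : Matrix (Fin 6) (Fin 6) ℝ, inS graph189 M ∧ M * M = 1 := by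
  rintro ⟨M, ⟨hsym, hpat⟩, hM2⟩
  -- zero entries
  have z04 : M 0 4 = 0 := by
    by_contra h; exact absurd ((hpat 0 4 (by decide)).mp h) (by simp [graph189, SimpleGraph.fromRel_adj])
  have z05 : M 0 5 = 0 := by
    by_contra h; exact absurd ((hpat 0 5 (by decide)).mp h) (by simp [graph189, SimpleGraph.fromRel_adj])
  have z13 : M 1 3 = 0 := by
    by_contra h; exact absurd ((hpat 1 3 (by decide)).mp h) (by simp [graph189, SimpleGraph.fromRel_adj])
  have z23 : M 2 3 = 0 := by
    by_contra h; exact absurd ((hpat 2 3 (by decide)).mp h) (by simp [graph189, SimpleGraph.fromRel_adj])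
  have z45 : M 4 5 = 0 := by
    by_contra h; exact absurd ((hpat 4 5 (by decide)).mp h) (by simp [graph189, SimpleGraph.fromRel_adj])
  have z40 : M 4 0 = 0 := by
    by_contra h; exact absurd ((hpat 4 0 (by decide)).mp h) (by simp [graph189, SimpleGraph.fromRel_adj])
  have z50 : M 5 0 = 0 := by
    by_contra h; exact absurd ((hpat 5 0 (by decide)).mp h) (by simp [graph189, SimpleGraph.fromRel_adj])
  have z31 : M 3 1 = 0 := by
    by_contra h; exact absurd ((hpat 3 1 (by decide)).mp h) (by simp [graph189, SimpleGraph.fromRel_adj])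
  have z32 : M 3 2 = 0 := by
    by_contra h; exact absurd ((hpat 3 2 (by decide)).mp h) (by simp [graph189, SimpleGraph.fromRel_adj])
  have z54 : M 5 4 = 0 := by
    by_contra h; exact absurd ((hpat 5 4 (by decide)).mp h) (by simp [graph189, SimpleGraph.fromRel_adj])
  -- nonzero entries
  have hq : M 0 1 ≠ 0 := (hpat 0 1 (by decide)).mpr (by simp [graph189, SimpleGraph.fromRel_adj])
  have hr : M 0 2 ≠ 0 := (hpat 0 2 (by decide)).mpr (by simp [graph189, SimpleGraph.fromRel_adj])
  have hs : M 1 2 ≠ 0 := (hpat 1 2 (by decide)).mpr (by simp [graph189, SimpleGraph.fromRel_adj])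
  have ht : M 0 3 ≠ 0 := (hpat 0 3 (by decide)).mpr (by simp [graph189, SimpleGraph.fromRel_adj])
  have hu : M 1 4 ≠ 0 := (hpat 1 4 (by decide)).mpr (by simp [graph189, SimpleGraph.fromRel_adj])
  have hy : M 3 4 ≠ 0 := (hpat 3 4 (by decide)).mpr (by simp [graph189, SimpleGraph.fromRel_adj])
  have hz : M 3 5 ≠ 0 := (hpat 3 5 (by decide)).mpr (by simp [graph189, SimpleGraph.fromRel_adj])
  -- symmetry instances
  have s21 : M 2 1 = M 1 2 := hsym.apply 1 2
  have s41 : M 4 1 = M 1 4 := hsym.apply 1 4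
  have s42 : M 4 2 = M 2 4 := hsym.apply 2 4
  have s43 : M 4 3 = M 3 4 := hsym.apply 3 4
  -- equations
  have E : ∀ i j : Fin 6, ∑ k, M i k * M k j = (1 : Matrix (Fin 6) (Fin 6) ℝ) i j := by
    intro i j; rw [← Matrix.mul_apply, hM2]
  have e03 := E 0 3
  have e34 := E 3 4
  have e35 := E 3 5
  have e01 := E 0 1
  have e14 := E 1 4
  have e15 := E 1 5
  have e04 := E 0 4
  have e05 := E 0 5
  have e45 := E 4 5
  simp only [Fin.sum_univ_six, Matrix.one_apply, if_true, if_false, eq_self_iff_true,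
    z04, z05, z13, z23, z45, z40, z50, z31, z32, z54, s21, s41, s42, s43, mul_zero, zero_mul,
    add_zero, zero_add, show ((0:Fin 6) ≠ 3) by decide] at e03 e34 e35 e01 e14 e15 e04 e05 e45
  exact keyalg (M 0 0) (M 1 1) (M 3 3) (M 4 4) (M 5 5) (M 0 1) (M 0 2) (M 1 2) (M 0 3)
    (M 1 4) (M 1 5) (M 2 4) (M 2 5) (M 3 4) (M 3 5) hq hr hs ht hy hz hu e03 e34 e35 e01 e14 e15 e04 e05 e45

lemma lower (A : Matrix (Fin 6) (Fin 6) ℝ) (hA : inS graph189 A) :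
    3 ≤ (spectrum ℝ A).ncard := by
  have hH : A.IsHermitian := by
    rw [Matrix.IsHermitian]
    ext i j
    simpa [Matrix.conjTranspose_apply] using congrFun (congrFun hA.1 i) j
  have hA01 : A 0 1 ≠ 0 :=
    (hA.2 0 1 (by decide)).mpr (by simp [graph189, SimpleGraph.fromRel_adj])
  by_contra hlt
  push_neg at hlt
  set l := hH.eigenvalues 0 with hl
  by_cases hall : ∀ i, hH.eigenvalues i = l
  · -- A - l•1 is symmetric with square zero
    set B := A - l • (1 : Matrix (Fin 6) (Fin 6) ℝ) with hB
    have hBsq : B * B = 0 := sq_eq A hH l l (fun i => Or.inl (hall i))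
    have hBsymm : ∀ k, B k 0 = B 0 k := by
      intro k
      have hk : A k 0 = A 0 k := congrFun (congrFun hA.1 0) k
      by_cases hk0 : k = 0
      · subst hk0; rfl
      · simp only [hB, Matrix.sub_apply, Matrix.smul_apply, Matrix.one_apply, smul_eq_mul, hk]
        simp [hk0, Ne.symm hk0]
    have h00 : ∑ k, B 0 k * B k 0 = 0 := by
      rw [← Matrix.mul_apply, hBsq]; simp
    simp only [Fin.sum_univ_six, hBsymm] at h00
    have h01 : B 0 1 = 0 := by nlinarith [mul_self_nonneg (B 0 0), mul_self_nonneg (B 0 1), mul_self_nonneg (B 0 2), mul_self_nonneg (B 0 3), mul_self_nonneg (B 0 4), mul_self_nonneg (B 0 5)]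
    apply hA01
    have : B 0 1 = A 0 1 := by simp [hB, Matrix.one_apply]
    rw [← this, h01]
  · push_neg at hall
    obtain ⟨j, hj⟩ := hall
    set m := hH.eigenvalues j with hm
    have hsub : ({l, m} : Set ℝ) ⊆ spectrum ℝ A := by
      rintro x (rfl | rfl)
      · exact hH.eigenvalues_mem_spectrum_real 0
      · exact hH.eigenvalues_mem_spectrum_real j
    have hfin : (spectrum ℝ A).Finite := Matrix.finite_spectrum A
    have hcard2 : ({l, m} : Set ℝ).ncard = 2 := Set.ncard_pair (Ne.symm hj)
    have heq : ({l, m} : Set ℝ) = spectrum ℝ A := by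
      apply Set.eq_of_subset_of_ncard_le hsub _ hfin
      omega
    have hev : ∀ i, hH.eigenvalues i = l ∨ hH.eigenvalues i = m := by
      intro i
      have := hH.eigenvalues_mem_spectrum_real i
      rw [← heq] at this
      simpa using this
    have hsq := sq_eq A hH l m hev
    have hlm : l - m ≠ 0 := sub_ne_zero.mpr (Ne.symm hj)
    have h0 : A * A - (l + m) • A + (l * m) • 1 = 0 := by
      calc A * A - (l + m) • A + (l * m) • 1
          = (A - l • 1) * (A - m • 1) := by
            simp only [sub_mul, mul_sub, smul_mul_assoc, mul_smul_comm, smul_smul, mul_one, one_mul]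
            module
        _ = 0 := hsq
    have hAA : A * A = (l + m) • A - (l * m) • 1 := by
      calc A * A = A * A - (l + m) • A + (l * m) • 1 + ((l + m) • A - (l * m) • 1) := by abel
        _ = (l + m) • A - (l * m) • 1 := by rw [h0]; abel
    apply no_inv
    refine ⟨(2 * (l - m)⁻¹) • A + (-((l - m)⁻¹ * (l + m))) • 1, ⟨?_, ?_⟩, ?_⟩
    · show _ = _
      simp only [Matrix.transpose_add, Matrix.transpose_smul, Matrix.transpose_one]
      rw [hA.1]
    · intro i j hij
      have h1 : (1 : Matrix (Fin 6) (Fin 6) ℝ) i j = 0 := Matrix.one_apply_ne hij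
      simp only [Matrix.add_apply, Matrix.smul_apply, h1, smul_eq_mul, mul_zero, add_zero]
      rw [← hA.2 i j hij]
      constructor
      · intro h hc; rw [hc] at h; simp at h
      · intro h
        exact mul_ne_zero (mul_ne_zero two_ne_zero (inv_ne_zero hlm)) h
    · simp only [add_mul, mul_add, smul_mul_assoc, mul_smul_comm, smul_smul, mul_one, one_mul, hAA]
      match_scalars
      · field_simp
        ring
      · field_simp
        ring


theorem stmt14 :
    (¬ ∃ M : Matrix (Fin 6) (Fin 6) ℝ, inS graph189 M ∧ M * M = 1) ∧
      3 ≤ qGraph graph189 := by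
  constructor
  · exact no_inv
  · unfold qGraph
    apply le_csInf
    · classical
      refine ⟨(spectrum ℝ (Matrix.of fun i j => if graph189.Adj i j then (1:ℝ) else 0)).ncard,
        Matrix.of (fun i j => if graph189.Adj i j then (1:ℝ) else 0), ⟨?_, ?_⟩, rfl⟩
      · show _ = _
        ext i j
        simp only [Matrix.transpose_apply, Matrix.of_apply]
        rw [SimpleGraph.adj_comm]
      · intro i j hij
        by_cases h : graph189.Adj i j <;> simp [h]
    · rintro k ⟨A, hA, rfl⟩
      exact lower A hA
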